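/- arXiv:2012.12859 — 5 statements merged into one kernel-verified Lean document; each statement's English description precedes it below -/
import Mathlib

section
/- Let (X,d) be a metric space and 1 ≤ p < ∞. If (μ_n) is a sequence in P_p(X) converging to μ ∈ P_p(X) in τ_w^p and (x_n) is a sequence in X converging to x ∈ X, then f_p(μ_n, x_n) → f_p(μ, x) as n → ∞. In other words, the function f_p : P_p(X) × X → [0,∞) is jointly sequentially continuous. -/
open MeasureTheory Filter Topology ProbabilityTheory

/-- `f_p(μ,x) := ∫ d(x,y)^p dμ(y)`. -/
noncomputable def fp {X : Type*} [MetricSpace X] [MeasurableSpace X]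
    (p : ℝ) (μ : Measure X) (x : X) : ℝ :=
  ∫ y, dist x y ^ p ∂μ

/-- Membership in `P_p(X)`. -/
def MemPp {X : Type*} [MetricSpace X] [MeasurableSpace X] (p : ℝ) (μ : Measure X) : Prop :=
  ∀ x : X, Integrable (fun y => dist x y ^ p) μ

/-- Weak convergence of a sequence of Borel measures. -/
def WeakConv {X : Type*} [MetricSpace X] [MeasurableSpace X]
    (μs : ℕ → Measure X) (μ : Measure X) : Prop :=
  ∀ g : BoundedContinuousFunction X ℝ,
    Tendsto (fun n => ∫ y, g y ∂(μs n)) atTop (𝓝 (∫ y, g y ∂μ))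

/-- Convergence in `τ_w^p`. -/
def TauWp {X : Type*} [MetricSpace X] [MeasurableSpace X]
    (p : ℝ) (μs : ℕ → Measure X) (μ : Measure X) : Prop :=
  WeakConv μs μ ∧ ∀ x : X, Tendsto (fun n => fp p (μs n) x) atTop (𝓝 (fp p μ x))

/-- Joint Fréchet p-mean `F_p(μ,C)`. -/
def Fp {X : Type*} [MetricSpace X] [MeasurableSpace X]
    (p : ℝ) (μ : Measure X) (C : Set X) : Set X :=
  {x ∈ C | ∀ x' ∈ C, fp p μ x ≤ fp p μ x'}

/-- Support of a measure. -/
def msupport {X : Type*} [MetricSpace X] [MeasurableSpace X] (μ : Measure X) : Set X :=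
  {x : X | ∀ U : Set X, IsOpen U → x ∈ U → 0 < μ U}

/-- Kuratowski upper limit. -/
def KurLs {X : Type*} [MetricSpace X] (C : ℕ → Set X) : Set X :=
  ⋂ n, closure (⋃ m, ⋃ (_ : n ≤ m), C m)

/-- Kuratowski lower limit. -/
def KurLi {X : Type*} [MetricSpace X] (C : ℕ → Set X) : Set X :=
  {x : X | ∀ ε : ℝ, 0 < ε → ∀ᶠ n in atTop, ∃ y ∈ C n, dist x y < ε}

/-- One-sided Hausdorff distance `ρ(C,C') = max_{x ∈ C} min_{x' ∈ C'} d(x,x')`. -/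
noncomputable def rho {X : Type*} [MetricSpace X] (C C' : Set X) : ℝ :=
  ⨆ x ∈ C, Metric.infDist x C'

/-- Empirical measure of the first `n` samples. -/
noncomputable def empMeasure {X Ω : Type*} [MeasurableSpace X]
    (Y : ℕ → Ω → X) (n : ℕ) (ω : Ω) : Measure X :=
  (n : ENNReal)⁻¹ • ∑ i ∈ Finset.range n, Measure.dirac (Y i ω)

/-- Effros σ-algebra on subsets of `X`. -/
def effros (X : Type*) [TopologicalSpace X] : MeasurableSpace (Set X) :=
  MeasurableSpace.generateFrom
    {S : Set (Set X) | ∃ U : Set X, IsOpen U ∧ S = {C : Set X | (C ∩ U).Nonempty}}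

/-- The relation `x ⇝_μ x'`. -/
def LeadsTo {X : Type*} [MetricSpace X] [MeasurableSpace X] (μ : Measure X) (x x' : X) : Prop :=
  ∃ ε₀ > (0 : ℝ), ∀ ε : ℝ, 0 < ε → ε ≤ ε₀ →
    ∃ φ : X → X, Set.MapsTo φ (Metric.ball x ε) (Metric.ball x' ε) ∧
      Measurable ((Metric.ball x ε).restrict φ) ∧
      ∀ z ∈ Metric.ball x ε, ∀ᵐ y ∂μ, dist (φ z) y = dist z y

/-- The equivalence relation `x ∼_μ x'`. -/
def SimEq {X : Type*} [MetricSpace X] [MeasurableSpace X] (μ : Measure X) (x x' : X) : Prop :=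
  LeadsTo μ x x' ∧ LeadsTo μ x' x

/-- The equivalence class `[x]_μ`. -/
def eqClass {X : Type*} [MetricSpace X] [MeasurableSpace X] (μ : Measure X) (x : X) : Set X :=
  {x' : X | SimEq μ x x'}


section frechetAux

variable {X : Type*} [MetricSpace X] [MeasurableSpace X] [BorelSpace X]

lemma fp_eq_rpow' (p : ℝ) (hp : 1 ≤ p) (ν : Measure X) (x : X) :
    fp p ν x = (eLpNorm (fun y => dist x y) (ENNReal.ofReal p) ν).toReal ^ p := by
  have hp0 : 0 < p := lt_of_lt_of_le one_pos hp
  have hpne : ENNReal.ofReal p ≠ 0 := by simp [ENNReal.ofReal_eq_zero, not_le, hp0]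
  rw [eLpNorm_eq_lintegral_rpow_enorm_toReal hpne ENNReal.ofReal_ne_top,
    ENNReal.toReal_ofReal hp0.le]
  have h1 : fp p ν x = (∫⁻ y, ENNReal.ofReal (dist x y ^ p) ∂ν).toReal := by
    rw [fp, integral_eq_lintegral_of_nonneg_ae]
    · exact Eventually.of_forall fun y => Real.rpow_nonneg dist_nonneg p
    · exact ((continuous_const.dist continuous_id).rpow_const
        (fun _ => Or.inr hp0.le)).aestronglyMeasurable
  rw [h1]
  have h2 : ∀ y : X, ENNReal.ofReal (dist x y ^ p) = ‖dist x y‖ₑ ^ p := by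
    intro y
    rw [← ENNReal.ofReal_rpow_of_nonneg dist_nonneg hp0.le, Real.enorm_eq_ofReal dist_nonneg]
  simp_rw [h2]
  rw [ENNReal.toReal_rpow, ← ENNReal.rpow_mul, one_div, inv_mul_cancel₀ hp0.ne',
    ENNReal.rpow_one]

lemma memLp_of_memPp' (p : ℝ) (hp : 1 ≤ p) (ν : Measure X) (hν : MemPp p ν) (x : X) :
    MemLp (fun y => dist x y) (ENNReal.ofReal p) ν := by
  have hp0 : 0 < p := lt_of_lt_of_le one_pos hp
  have hpne : ENNReal.ofReal p ≠ 0 := by simp [ENNReal.ofReal_eq_zero, not_le, hp0]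
  have hm : AEStronglyMeasurable (fun y => dist x y) ν :=
    (continuous_const.dist continuous_id).aestronglyMeasurable
  rw [← memLp_norm_rpow_iff (q := ENNReal.ofReal p) hm hpne ENNReal.ofReal_ne_top,
    ENNReal.div_self hpne ENNReal.ofReal_ne_top, memLp_one_iff_integrable]
  have : (fun y : X => ‖dist x y‖ ^ (ENNReal.ofReal p).toReal) = fun y => dist x y ^ p := by
    funext y
    rw [Real.norm_of_nonneg dist_nonneg, ENNReal.toReal_ofReal hp0.le]
  rw [this]
  exact hν x

lemma eLpNorm_dist_lipschitz' (p : ℝ) (hp : 1 ≤ p) (ν : Measure X) [IsProbabilityMeasure ν]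
    (x x' : X) :
    eLpNorm (fun y => dist x y) (ENNReal.ofReal p) ν ≤
      eLpNorm (fun y => dist x' y) (ENNReal.ofReal p) ν + ENNReal.ofReal (dist x x') := by
  have hp0 : 0 < p := lt_of_lt_of_le one_pos hp
  have hpne : ENNReal.ofReal p ≠ 0 := by simp [ENNReal.ofReal_eq_zero, not_le, hp0]
  have hp1 : 1 ≤ ENNReal.ofReal p := by
    simpa using ENNReal.ofReal_le_ofReal hp
  have hmono : eLpNorm (fun y => dist x y) (ENNReal.ofReal p) ν ≤
      eLpNorm (fun y => dist x' y + dist x' x) (ENNReal.ofReal p) ν := by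
    apply eLpNorm_mono
    intro y
    rw [Real.norm_of_nonneg dist_nonneg, Real.norm_of_nonneg (by positivity)]
    have ht := dist_triangle x x' y
    rw [dist_comm x x'] at ht
    linarith
  refine hmono.trans ?_
  have hadd := eLpNorm_add_le (μ := ν) (p := ENNReal.ofReal p)
    (f := fun y => dist x' y) (g := fun _ => dist x' x)
    (continuous_const.dist continuous_id).aestronglyMeasurable
    aestronglyMeasurable_const hp1
  refine hadd.trans ?_
  gcongr
  rw [eLpNorm_const _ hpne (IsProbabilityMeasure.ne_zero ν)]
  simp [Real.enorm_eq_ofReal dist_nonneg, dist_comm x x']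

end frechetAux

theorem frechet_stmt2 {X : Type*} [MetricSpace X] [MeasurableSpace X] [BorelSpace X]
    (p : ℝ) (hp : 1 ≤ p)
    (μs : ℕ → Measure X) (μ : Measure X)
    (hμsprob : ∀ n, IsProbabilityMeasure (μs n)) (hμprob : IsProbabilityMeasure μ)
    (hμsPp : ∀ n, MemPp p (μs n)) (hμPp : MemPp p μ)
    (hconv : TauWp p μs μ)
    (x : ℕ → X) (x₀ : X) (hx : Tendsto x atTop (𝓝 x₀)) :
    Tendsto (fun n => fp p (μs n) (x n)) atTop (𝓝 (fp p μ x₀)) := by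
  have hp0 : 0 < p := lt_of_lt_of_le one_pos hp
  set s : Measure X → X → ℝ :=
    fun ν z => (eLpNorm (fun y => dist z y) (ENNReal.ofReal p) ν).toReal with hs
  have hfin : ∀ n z, eLpNorm (fun y => dist z y) (ENNReal.ofReal p) (μs n) ≠ ⊤ :=
    fun n z => (memLp_of_memPp' p hp (μs n) (hμsPp n) z).2.ne
  have hs_nonneg : ∀ ν z, 0 ≤ s ν z := fun ν z => ENNReal.toReal_nonneg
  have hs_eq : ∀ ν z, s ν z = (fp p ν z) ^ (1/p) := by
    intro ν z
    rw [fp_eq_rpow' p hp ν z, ← Real.rpow_mul (hs_nonneg ν z), mul_one_div,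
      div_self hp0.ne', Real.rpow_one]
  have hsx₀ : Tendsto (fun n => s (μs n) x₀) atTop (𝓝 (s μ x₀)) := by
    simp_rw [hs_eq]
    exact (Real.continuousAt_rpow_const _ _ (Or.inr (by positivity))).tendsto.comp (hconv.2 x₀)
  have hlip : ∀ n, |s (μs n) (x n) - s (μs n) x₀| ≤ dist (x n) x₀ := by
    intro n
    have := hμsprob n
    rw [abs_sub_le_iff]
    constructor
    · have h := eLpNorm_dist_lipschitz' p hp (μs n) (x n) x₀
      have := ENNReal.toReal_mono
        (ENNReal.add_ne_top.2 ⟨hfin n x₀, ENNReal.ofReal_ne_top⟩) h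
      rw [ENNReal.toReal_add (hfin n x₀) ENNReal.ofReal_ne_top,
        ENNReal.toReal_ofReal dist_nonneg] at this
      linarith [this]
    · have h := eLpNorm_dist_lipschitz' p hp (μs n) x₀ (x n)
      have := ENNReal.toReal_mono
        (ENNReal.add_ne_top.2 ⟨hfin n (x n), ENNReal.ofReal_ne_top⟩) h
      rw [ENNReal.toReal_add (hfin n (x n)) ENNReal.ofReal_ne_top,
        ENNReal.toReal_ofReal dist_nonneg, dist_comm] at this
      linarith [this]
  have hdist : Tendsto (fun n => dist (x n) x₀) atTop (𝓝 0) :=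
    tendsto_iff_dist_tendsto_zero.mp hx
  have hsxn : Tendsto (fun n => s (μs n) (x n)) atTop (𝓝 (s μ x₀)) := by
    have hdiff : Tendsto (fun n => s (μs n) (x n) - s (μs n) x₀) atTop (𝓝 0) :=
      squeeze_zero_norm (fun n => hlip n) hdist
    have := hdiff.add hsx₀
    simpa using this
  have hfinal : Tendsto (fun n => s (μs n) (x n) ^ p) atTop (𝓝 (s μ x₀ ^ p)) :=
    (Real.continuousAt_rpow_const _ _ (Or.inr hp0.le)).tendsto.comp hsxn
  have heq : ∀ n, fp p (μs n) (x n) = s (μs n) (x n) ^ p := fun n => fp_eq_rpow' p hp _ _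
  have heq₀ : fp p μ x₀ = s μ x₀ ^ p := fp_eq_rpow' p hp _ _
  simp_rw [heq, heq₀]
  exact hfinal
end

section
/- Let (X,d) be a metric space with the Heine–Borel property and 1 ≤ p < ∞. Then for every μ ∈ P_p(X) and every nonempty closed C ⊆ X, the joint Fréchet p-mean F_p(μ, C) is nonempty and compact. -/
open MeasureTheory Filter Topology ProbabilityTheory

lemma aux_rpow_bound (p t : ℝ) (hp : 0 ≤ p) (ht : 0 ≤ t) :
    (1 + t) ^ p ≤ 2 ^ p * (1 + t ^ p) := by
  have h1 : (1 + t) ≤ 2 * max 1 t := by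
    rcases le_total t 1 with h | h
    · rw [max_eq_left h]; linarith
    · rw [max_eq_right h]; linarith
  have h0 : (0:ℝ) ≤ max 1 t := le_max_of_le_left zero_le_one
  calc (1 + t) ^ p ≤ (2 * max 1 t) ^ p := Real.rpow_le_rpow (by linarith) h1 hp
    _ = 2 ^ p * (max 1 t) ^ p := Real.mul_rpow (by norm_num) h0
    _ ≤ 2 ^ p * (1 + t ^ p) := by
        apply mul_le_mul_of_nonneg_left _ (Real.rpow_nonneg (by norm_num) p)
        rcases le_total t 1 with h | h
        · rw [max_eq_left h, Real.one_rpow]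
          have := Real.rpow_nonneg ht p; linarith
        · rw [max_eq_right h]
          have : (0:ℝ) ≤ 1 := zero_le_one; linarith

lemma fp_continuous {X : Type*} [MetricSpace X] [MeasurableSpace X] [BorelSpace X]
    {p : ℝ} (hp : 1 ≤ p) {μ : Measure X} [IsFiniteMeasure μ] (hμPp : MemPp p μ) :
    Continuous (fp p μ) := by
  have hp0 : 0 < p := lt_of_lt_of_le one_pos hp
  rw [continuous_iff_continuousAt]
  intro x
  apply continuousAt_of_dominated (bound := fun y => 2 ^ p * (1 + dist x y ^ p))
  · filter_upwards with x'
    exact (Continuous.rpow_const (continuous_const.dist continuous_id)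
      fun _ => Or.inr hp0.le).aestronglyMeasurable
  · filter_upwards [Metric.ball_mem_nhds x one_pos] with x' hx'
    filter_upwards with y
    rw [Real.norm_eq_abs, abs_of_nonneg (Real.rpow_nonneg dist_nonneg _)]
    have h1 : dist x' y ≤ 1 + dist x y := by
      have h2 := dist_triangle x' x y
      rw [Metric.mem_ball] at hx'
      linarith
    calc dist x' y ^ p ≤ (1 + dist x y) ^ p :=
          Real.rpow_le_rpow dist_nonneg h1 hp0.le
      _ ≤ 2 ^ p * (1 + dist x y ^ p) := aux_rpow_bound p _ hp0.le dist_nonneg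
  · exact ((integrable_const (1:ℝ)).add (hμPp x)).const_mul _
  · filter_upwards with y
    exact (Continuous.rpow_const (continuous_id.dist continuous_const)
      fun _ => Or.inr hp0.le).continuousAt

lemma fp_lower {X : Type*} [MetricSpace X] [MeasurableSpace X] [BorelSpace X]
    {p : ℝ} (hp : 1 ≤ p) {μ : Measure X} [IsFiniteMeasure μ] (hμPp : MemPp p μ)
    (x x₀ : X) (R r : ℝ) (hr : 0 ≤ r) (hd : R + r ≤ dist x x₀) :
    r ^ p * (μ (Metric.closedBall x₀ R)).toReal ≤ fp p μ x := by
  have hp0 : 0 < p := lt_of_lt_of_le one_pos hp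
  have hmono : (Metric.closedBall x₀ R).indicator (fun _ => r ^ p) ≤
      fun y => dist x y ^ p := by
    intro y
    by_cases hy : y ∈ Metric.closedBall x₀ R
    · rw [Set.indicator_of_mem hy]
      apply Real.rpow_le_rpow hr _ hp0.le
      rw [Metric.mem_closedBall] at hy
      have h2 := dist_triangle x x₀ y
      have h3 : dist x₀ y = dist y x₀ := dist_comm _ _
      have h4 := abs_dist_sub_le x x₀ y
      have h5 : dist x y ≥ dist x x₀ - dist x₀ y := by
        have := dist_triangle x y x₀
        rw [dist_comm y x₀] at *
        linarith [dist_triangle x y x₀]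
      linarith
    · rw [Set.indicator_of_notMem hy]
      exact Real.rpow_nonneg dist_nonneg _
  have hint : Integrable ((Metric.closedBall x₀ R).indicator (fun _ => r ^ p)) μ :=
    (integrable_const _).indicator measurableSet_closedBall
  have := integral_mono hint (hμPp x) hmono
  rwa [integral_indicator_const _ measurableSet_closedBall,
    smul_eq_mul, mul_comm] at this

theorem frechet_stmt4 {X : Type*} [MetricSpace X] [MeasurableSpace X] [BorelSpace X]
    (hHB : ∀ s : Set X, IsClosed s → Bornology.IsBounded s → IsCompact s)
    (p : ℝ) (hp : 1 ≤ p)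
    (μ : Measure X) (hμprob : IsProbabilityMeasure μ) (hμPp : MemPp p μ)
    (C : Set X) (hC : IsClosed C) (hCne : C.Nonempty) :
    (Fp p μ C).Nonempty ∧ IsCompact (Fp p μ C) := by
  have hp0 : 0 < p := lt_of_lt_of_le one_pos hp
  obtain ⟨x₀, hx₀C⟩ := hCne
  have hcont : Continuous (fp p μ) := fp_continuous hp hμPp
  -- find a ball of positive measure
  obtain ⟨R, hR⟩ : ∃ n : ℕ, 0 < μ (Metric.closedBall x₀ n) := by
    by_contra h
    push_neg at h
    have h0 : ∀ n : ℕ, μ (Metric.closedBall x₀ n) = 0 := fun n => le_antisymm (h n) bot_le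
    have hcover : (Set.univ : Set X) ⊆ ⋃ n : ℕ, Metric.closedBall x₀ n := by
      intro y _
      obtain ⟨n, hn⟩ := exists_nat_ge (dist y x₀)
      exact Set.mem_iUnion.2 ⟨n, Metric.mem_closedBall.2 hn⟩
    have : μ Set.univ = 0 :=
      measure_mono_null hcover (measure_iUnion_null h0)
    rw [measure_univ] at this
    exact one_ne_zero this
  set c : ℝ := (μ (Metric.closedBall x₀ R)).toReal with hc
  have hcpos : 0 < c := ENNReal.toReal_pos hR.ne' (measure_ne_top μ _)
  set M : ℝ := fp p μ x₀ with hM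
  have hM0 : 0 ≤ M := integral_nonneg fun y => Real.rpow_nonneg dist_nonneg _
  set r : ℝ := ((M + 1) / c) ^ (1 / p) with hrdef
  have hr0 : 0 ≤ r := Real.rpow_nonneg (by positivity) _
  have hrp : r ^ p = (M + 1) / c := by
    rw [hrdef, ← Real.rpow_mul (by positivity), one_div_mul_cancel hp0.ne', Real.rpow_one]
  -- the sublevel set
  set T : Set X := C ∩ fp p μ ⁻¹' Set.Iic M with hT
  have hx₀T : x₀ ∈ T := ⟨hx₀C, le_refl M⟩
  have hTclosed : IsClosed T := hC.inter (isClosed_Iic.preimage hcont)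
  have hTsub : T ⊆ Metric.closedBall x₀ (R + r) := by
    intro x hx
    rw [Metric.mem_closedBall]
    by_contra hdx
    push_neg at hdx
    have hlow := fp_lower hp hμPp x x₀ R r hr0 hdx.le
    rw [hrp, div_mul_cancel₀ _ hcpos.ne'] at hlow
    have := hx.2
    simp only [Set.mem_preimage, Set.mem_Iic] at this
    linarith
  have hTcomp : IsCompact T :=
    hHB T hTclosed (Metric.isBounded_closedBall.subset hTsub)
  obtain ⟨z, hzT, hz⟩ := hTcomp.exists_isMinOn ⟨x₀, hx₀T⟩ hcont.continuousOn
  have hzFp : z ∈ Fp p μ C := by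
    refine ⟨hzT.1, fun x' hx' => ?_⟩
    rcases le_total (fp p μ x') M with h | h
    · exact hz ⟨hx', h⟩
    · exact le_trans (hz hx₀T) h
  constructor
  · exact ⟨z, hzFp⟩
  · have hFpsub : Fp p μ C ⊆ T := fun x hx => ⟨hx.1, hx.2 x₀ hx₀C⟩
    have hFpclosed : IsClosed (Fp p μ C) := by
      have heq : Fp p μ C = C ∩ ⋂ x' ∈ C, {x | fp p μ x ≤ fp p μ x'} := by
        ext x
        simp [Fp, Set.mem_iInter]
      rw [heq]
      exact hC.inter (isClosed_iInter fun x' => isClosed_iInter fun _ =>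
        isClosed_le hcont continuous_const)
    exact hTcomp.of_isClosed_subset hFpclosed hFpsub
end

section
/- Let (X,d) be a separable, locally compact metric space, let (Ω, F, P) be a probability space, and let C_n : Ω → C(X), n ∈ ℕ, be maps into the closed subsets of X, each measurable with respect to the Effros σ-algebra E(X). Then the map ω ↦ Ls_n C_n(ω) is also F/E(X)-measurable; that is, for every open U ⊆ X, the set {ω ∈ Ω : (Ls_n C_n(ω)) ∩ U ≠ ∅} belongs to F. -/
open MeasureTheory Filter Topology ProbabilityTheory

theorem frechet_stmt11 {X Ω : Type*} [MetricSpace X] [TopologicalSpace.SeparableSpace X]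
    [LocallyCompactSpace X] [mΩ : MeasurableSpace Ω]
    (P : Measure Ω) (hP : IsProbabilityMeasure P)
    (C : ℕ → Ω → Set X) (hclosed : ∀ n ω, IsClosed (C n ω))
    (hmeas : ∀ n, @Measurable Ω (Set X) mΩ (effros X) (C n)) :
    @Measurable Ω (Set X) mΩ (effros X) (fun ω => KurLs (fun n => C n ω)) := by
  classical
  apply measurable_generateFrom
  rintro S ⟨U, hU, rfl⟩
  have hgen : ∀ (m : ℕ) (V : Set X), IsOpen V →
      MeasurableSet {ω | (C m ω ∩ V).Nonempty} := fun m V hV =>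
    hmeas m (MeasurableSpace.measurableSet_generateFrom ⟨V, hV, rfl⟩)
  haveI : SecondCountableTopology X := UniformSpace.secondCountable_of_separable X
  set B := TopologicalSpace.countableBasis X with hB
  set T : Set (Set X) := {V | V ∈ B ∧ IsCompact (closure V) ∧ closure V ⊆ U} with hT
  have hTc : T.Countable :=
    (TopologicalSpace.countable_countableBasis X).mono fun V hV => hV.1
  have key : (fun ω => KurLs fun n => C n ω) ⁻¹' {A | (A ∩ U).Nonempty}
      = ⋃ V ∈ T, ⋂ n, ⋃ m, ⋃ _ : n ≤ m, {ω | (C m ω ∩ V).Nonempty} := by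
    ext ω
    simp only [Set.mem_preimage, Set.mem_setOf_eq, Set.mem_iUnion, Set.mem_iInter]
    constructor
    · rintro ⟨x, hxLs, hxU⟩
      obtain ⟨K, hKc, hxK, hKU⟩ := exists_compact_subset hU hxU
      obtain ⟨V, hVB, hxV, hVK⟩ :=
        (TopologicalSpace.isBasis_countableBasis X).exists_subset_of_mem_open hxK isOpen_interior
      have hclV : closure V ⊆ K :=
        (closure_mono hVK).trans (closure_minimal interior_subset hKc.isClosed)
      refine ⟨V, ⟨hVB, hKc.of_isClosed_subset isClosed_closure hclV, hclV.trans hKU⟩, ?_⟩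
      intro n
      have hxcl : x ∈ closure (⋃ m, ⋃ _ : n ≤ m, C m ω) := by
        have := hxLs
        rw [KurLs, Set.mem_iInter] at this
        exact this n
      obtain ⟨y, hyV, hyU⟩ := (_root_.mem_closure_iff.mp hxcl) V
        ((TopologicalSpace.isBasis_countableBasis X).isOpen hVB) hxV
      simp only [Set.mem_iUnion] at hyU
      obtain ⟨m, hm, hyC⟩ := hyU
      exact ⟨m, hm, ⟨y, hyC, hyV⟩⟩
    · rintro ⟨V, hVT, h⟩
      set F : ℕ → Set X := fun n => closure (⋃ m, ⋃ _ : n ≤ m, C m ω) ∩ closure V with hF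
      have hdec : ∀ n, F (n + 1) ⊆ F n := by
        intro n
        apply Set.inter_subset_inter_left
        apply closure_mono
        exact Set.iUnion_mono fun m => Set.iUnion_subset fun hm =>
          Set.subset_iUnion_of_subset (Nat.le_of_succ_le hm) (le_refl _)
      have hne : ∀ n, (F n).Nonempty := by
        intro n
        obtain ⟨m, hm, x, hxC, hxV⟩ := h n
        exact ⟨x, subset_closure (Set.mem_iUnion.mpr ⟨m, Set.mem_iUnion.mpr ⟨hm, hxC⟩⟩),
          subset_closure hxV⟩
      have hcl : ∀ n, IsClosed (F n) := fun n => isClosed_closure.inter isClosed_closure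
      have hcomp : IsCompact (F 0) :=
        hVT.2.1.of_isClosed_subset (hcl 0) Set.inter_subset_right
      obtain ⟨x, hx⟩ :=
        IsCompact.nonempty_iInter_of_sequence_nonempty_isCompact_isClosed F hdec hne hcomp hcl
      rw [Set.mem_iInter] at hx
      refine ⟨x, ?_, hVT.2.2 (hx 0).2⟩
      rw [KurLs, Set.mem_iInter]
      exact fun n => (hx n).1
  rw [key]
  exact MeasurableSet.biUnion hTc fun V hVT =>
    MeasurableSet.iInter fun n => MeasurableSet.iUnion fun m => MeasurableSet.iUnion fun _ =>
      hgen m V ((TopologicalSpace.isBasis_countableBasis X).isOpen hVT.1)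
end

section
/- Let (X,d) be a separable metric space, 1 ≤ p < ∞, and μ ∈ P_p(X). Let Y_1, Y_2, … be i.i.d. X-valued random elements with common distribution μ, and let bar μ_n := (1/n)∑_{i=1}^n δ_{Y_i} be the empirical measures. Then, almost surely, bar μ_n → μ in τ_w^p; that is, almost surely bar μ_n → μ weakly and (1/n)∑_{i=1}^n d(x,Y_i)^p → ∫_X d(x,y)^p dμ(y) for every x ∈ X. -/
open MeasureTheory Filter Topology ProbabilityTheory

open scoped ENNReal NNReal

section Aux
variable {X Ω : Type*} [MetricSpace X] [MeasurableSpace X] [BorelSpace X]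

lemma my_integrable_dirac {f : X → ℝ} (hf : Measurable f) (a : X) :
    Integrable f (Measure.dirac a) := by
  refine ⟨hf.aestronglyMeasurable, ?_⟩
  simp [HasFiniteIntegral, lintegral_dirac]

lemma empMeasure_isProb (Y : ℕ → Ω → X) (n : ℕ) (ω : Ω) :
    IsProbabilityMeasure (empMeasure Y (n + 1) ω) := by
  constructor
  simp only [empMeasure, Measure.smul_apply, Measure.coe_finset_sum, Finset.sum_apply,
    Measure.dirac_apply_of_mem (Set.mem_univ _), Finset.sum_const, Finset.card_range,
    nsmul_eq_mul, mul_one, smul_eq_mul]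
  rw [ENNReal.inv_mul_cancel] <;> simp

lemma integrable_empMeasure {f : X → ℝ} (hf : Measurable f) (Y : ℕ → Ω → X) (n : ℕ) (ω : Ω) :
    Integrable f (empMeasure Y n ω) := by
  by_cases hn : n = 0
  · simp [empMeasure, hn]
  · rw [empMeasure, integrable_smul_measure (by simp) (by simp [hn])]
    rw [integrable_finset_sum_measure]
    exact fun i _ => my_integrable_dirac hf _

lemma integral_empMeasure {f : X → ℝ} (hf : Measurable f) (Y : ℕ → Ω → X) (n : ℕ) (ω : Ω) :
    ∫ y, f y ∂(empMeasure Y n ω) = (∑ i ∈ Finset.range n, f (Y i ω)) / n := by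
  rw [empMeasure, integral_smul_measure,
    integral_finset_sum_measure (fun i _ => my_integrable_dirac hf _)]
  simp only [integral_dirac, ENNReal.toReal_inv, ENNReal.toReal_natCast, smul_eq_mul]
  rw [div_eq_mul_inv, mul_comm]

lemma empMeasure_apply (Y : ℕ → Ω → X) (n : ℕ) (ω : Ω) {V : Set X} (hV : MeasurableSet V) :
    (empMeasure Y n ω) V
      = ENNReal.ofReal ((∑ i ∈ Finset.range n, Set.indicator V (fun _ => (1:ℝ)) (Y i ω)) / n) := by
  by_cases hn : n = 0
  · simp [empMeasure, hn]
  have key : ∀ i, Measure.dirac (Y i ω) V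
      = ENNReal.ofReal (Set.indicator V (fun _ => (1:ℝ)) (Y i ω)) := by
    intro i
    rw [Measure.dirac_apply' _ hV]
    by_cases h : Y i ω ∈ V <;> simp [h]
  rw [empMeasure, Measure.smul_apply, Measure.coe_finset_sum, Finset.sum_apply,
    Finset.sum_congr rfl (fun i _ => key i),
    ← ENNReal.ofReal_sum_of_nonneg (fun i _ => Set.indicator_nonneg (fun _ _ => zero_le_one) _),
    ENNReal.ofReal_div_of_pos (by exact_mod_cast Nat.pos_of_ne_zero hn), smul_eq_mul,
    ENNReal.ofReal_natCast, div_eq_mul_inv, mul_comm]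

lemma slln_aux [MeasurableSpace Ω] {P : Measure Ω} [IsProbabilityMeasure P] {μ : Measure X}
    (Y : ℕ → Ω → X) (hYmeas : ∀ i, Measurable (Y i))
    (hindep : iIndepFun Y P)
    (hlaw : ∀ i, Measure.map (Y i) P = μ)
    {g : X → ℝ} (hg : Measurable g) (hgi : Integrable g μ) :
    ∀ᵐ ω ∂P, Tendsto (fun n : ℕ => (∑ i ∈ Finset.range (n + 1), g (Y i ω)) / (n + 1))
      atTop (𝓝 (∫ y, g y ∂μ)) := by
  have hint : Integrable (fun ω => g (Y 0 ω)) P := by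
    have h0 : Integrable g (Measure.map (Y 0) P) := by rw [hlaw 0]; exact hgi
    exact (integrable_map_measure hg.aestronglyMeasurable (hYmeas 0).aemeasurable).mp h0
  have hid : ∀ i, IdentDistrib (fun ω => g (Y i ω)) (fun ω => g (Y 0 ω)) P P := fun i =>
    IdentDistrib.comp ⟨(hYmeas i).aemeasurable, (hYmeas 0).aemeasurable, by
      rw [hlaw i, hlaw 0]⟩ hg
  have hpind : Pairwise (Function.onFun (IndepFun · · P) fun i ω => g (Y i ω)) := fun i j hij =>
    (hindep.indepFun hij).comp hg hg
  have H := strong_law_ae_real (fun i ω => g (Y i ω)) hint hpind hid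
  have hE : (∫ ω, g (Y 0 ω) ∂P) = ∫ y, g y ∂μ := by
    rw [← hlaw 0, integral_map (hYmeas 0).aemeasurable hg.aestronglyMeasurable]
  filter_upwards [H] with ω hω
  rw [hE] at hω
  have := hω.comp (tendsto_add_atTop_nat 1)
  refine this.congr fun n => ?_
  simp only [Function.comp_apply]
  push_cast
  ring

lemma fp_eq_toReal {ν : Measure X} {q : ℝ} (hq : 0 ≤ q) {x : X}
    (hint : Integrable (fun y => dist x y ^ q) ν) :
    fp q ν x = (∫⁻ y, ENNReal.ofReal (dist x y) ^ q ∂ν).toReal := by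
  have h1 : ENNReal.ofReal (fp q ν x) = ∫⁻ y, ENNReal.ofReal (dist x y ^ q) ∂ν :=
    ofReal_integral_eq_lintegral_ofReal hint
      (Filter.Eventually.of_forall fun y => Real.rpow_nonneg dist_nonneg q)
  have h2 : ∀ y : X, ENNReal.ofReal (dist x y ^ q) = ENNReal.ofReal (dist x y) ^ q := fun y =>
    (ENNReal.ofReal_rpow_of_nonneg dist_nonneg hq).symm
  simp_rw [h2] at h1
  rw [← h1]
  exact (ENNReal.toReal_ofReal (integral_nonneg fun y => Real.rpow_nonneg dist_nonneg q)).symm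

lemma fp_lintegral_lt_top {ν : Measure X} {q : ℝ} (hq : 0 ≤ q) {x : X}
    (hint : Integrable (fun y => dist x y ^ q) ν) :
    (∫⁻ y, ENNReal.ofReal (dist x y) ^ q ∂ν) < ⊤ := by
  have := hint.lintegral_lt_top
  simp_rw [← ENNReal.ofReal_rpow_of_nonneg dist_nonneg hq] at this
  exact this

lemma fp_rpow_lipschitz {ν : Measure X} [IsProbabilityMeasure ν] {q : ℝ} (hq : 1 ≤ q)
    (hint : ∀ x : X, Integrable (fun y => dist x y ^ q) ν) (x x' : X) :
    fp q ν x ^ (1 / q) ≤ fp q ν x' ^ (1 / q) + dist x x' := by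
  have hq0 : 0 < q := lt_of_lt_of_le one_pos hq
  set c : ℝ≥0∞ := ENNReal.ofReal (dist x x') with hc
  set F : X → ℝ≥0∞ := fun z => ∫⁻ y, ENNReal.ofReal (dist z y) ^ q ∂ν with hF
  have hmeas : ∀ z : X, AEMeasurable (fun y => ENNReal.ofReal (dist z y)) ν := fun z =>
    (ENNReal.measurable_ofReal.comp (continuous_const.dist continuous_id).measurable).aemeasurable
  have key : (F x) ^ (1 / q) ≤ (F x') ^ (1 / q) + c := by
    have h1 : F x ≤ ∫⁻ y, ((fun _ => c) y + ENNReal.ofReal (dist x' y)) ^ q ∂ν := by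
      apply lintegral_mono
      intro y
      apply ENNReal.rpow_le_rpow _ (le_of_lt hq0)
      rw [hc, ← ENNReal.ofReal_add dist_nonneg dist_nonneg]
      exact ENNReal.ofReal_le_ofReal (dist_triangle x x' y)
    have h2 := ENNReal.lintegral_Lp_add_le (μ := ν)
      (aemeasurable_const (b := c)) (hmeas x') hq
    have h3 : (∫⁻ _ : X, c ^ q ∂ν) ^ (1 / q) = c := by
      rw [lintegral_const, measure_univ, mul_one, ← ENNReal.rpow_mul,
        mul_one_div_cancel (ne_of_gt hq0), ENNReal.rpow_one]
    calc (F x) ^ (1 / q) ≤ (∫⁻ y, ((fun _ => c) y + ENNReal.ofReal (dist x' y)) ^ q ∂ν) ^ (1 / q) :=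
          ENNReal.rpow_le_rpow h1 (by positivity)
      _ ≤ (∫⁻ _ : X, c ^ q ∂ν) ^ (1 / q) + (F x') ^ (1 / q) := h2
      _ = c + (F x') ^ (1 / q) := by rw [h3]
      _ = (F x') ^ (1 / q) + c := add_comm _ _
  have hfin' : (F x') ^ (1 / q) ≠ ⊤ :=
    ENNReal.rpow_ne_top_of_nonneg (by positivity) (ne_of_lt (fp_lintegral_lt_top hq0.le (hint x')))
  rw [fp_eq_toReal hq0.le (hint x), fp_eq_toReal hq0.le (hint x'),
    ENNReal.toReal_rpow, ENNReal.toReal_rpow]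
  have := ENNReal.toReal_mono (by
      exact ENNReal.add_ne_top.mpr ⟨hfin', ENNReal.ofReal_ne_top⟩) key
  rwa [ENNReal.toReal_add hfin' ENNReal.ofReal_ne_top, ENNReal.toReal_ofReal dist_nonneg] at this

lemma weak_of_tendsto_on_basis {νs : ℕ → Measure X} {μ : Measure X}
    {B : Set (Set X)} (hBbasis : TopologicalSpace.IsTopologicalBasis B) (hBcount : B.Countable)
    (h : ∀ t : Set (Set X), t ⊆ B → t.Finite →
      Tendsto (fun n => ((νs n) (⋃₀ t)).toReal) atTop (𝓝 ((μ (⋃₀ t)).toReal)))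
    (hfin : ∀ n, ∀ s : Set X, νs n s ≠ ⊤) (hfinμ : ∀ s : Set X, μ s ≠ ⊤)
    (G : Set X) (hG : IsOpen G) :
    μ G ≤ atTop.liminf (fun n => νs n G) := by
  set t : Set (Set X) := {s ∈ B | s ⊆ G} with ht
  have hGt : G = ⋃₀ t := hBbasis.open_eq_sUnion' hG
  have htc : t.Countable := hBcount.mono (Set.sep_subset _ _)
  rcases t.eq_empty_or_nonempty with hte | htne
  · rw [hGt, hte]; simp
  obtain ⟨f, hf⟩ := htc.exists_eq_range htne
  set V : ℕ → Set X := fun k => ⋃₀ (f '' Set.Iic k) with hV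
  have hVsub : ∀ k, f '' Set.Iic k ⊆ B := by
    intro k
    rintro s ⟨i, _, rfl⟩
    have : f i ∈ t := by rw [hf]; exact Set.mem_range_self i
    exact this.1
  have hVG : ∀ k, V k ⊆ G := by
    intro k
    apply Set.sUnion_subset
    rintro s ⟨i, _, rfl⟩
    have : f i ∈ t := by rw [hf]; exact Set.mem_range_self i
    exact this.2
  have hmono : Monotone V := by
    intro a b hab
    exact Set.sUnion_subset_sUnion (Set.image_mono (Set.Iic_subset_Iic.mpr hab))
  have hunion : (⋃ k, V k) = G := by
    apply Set.Subset.antisymm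
    · exact Set.iUnion_subset hVG
    · rw [hGt]
      intro x hx
      obtain ⟨s, hst, hxs⟩ := hx
      rw [hf] at hst
      obtain ⟨i, rfl⟩ := hst
      exact Set.mem_iUnion.mpr ⟨i, Set.mem_sUnion.mpr ⟨f i, ⟨i, Set.mem_Iic.mpr le_rfl, rfl⟩, hxs⟩⟩
  have hμlim : Tendsto (fun k => μ (V k)) atTop (𝓝 (μ G)) := by
    have := tendsto_measure_iUnion_atTop (μ := μ) hmono
    rwa [hunion] at this
  refine le_of_tendsto hμlim (Filter.Eventually.of_forall fun k => ?_)
  have hVk : Tendsto (fun n => νs n (V k)) atTop (𝓝 (μ (V k))) := by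
    have := h (f '' Set.Iic k) (hVsub k) ((Set.finite_Iic k).image f)
    exact (ENNReal.tendsto_toReal_iff (fun n => hfin n _) (hfinμ _)).mp this
  calc μ (V k) = atTop.liminf (fun n => νs n (V k)) := hVk.liminf_eq.symm
    _ ≤ atTop.liminf (fun n => νs n G) :=
        liminf_le_liminf (Filter.Eventually.of_forall fun n => measure_mono (hVG k))

lemma prob_tendsto_of_liminf [OpensMeasurableSpace X] [TopologicalSpace.SeparableSpace X]
    {νs : ℕ → ProbabilityMeasure X} {μ : ProbabilityMeasure X}
    (h : ∀ G : Set X, IsOpen G →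
      (μ : Measure X) G ≤ atTop.liminf (fun n => (νs n : Measure X) G)) :
    Tendsto νs atTop (𝓝 μ) := by
  apply MeasureTheory.tendsto_of_forall_isOpen_le_liminf
  intro G hG
  have aux : ENNReal.ofNNReal (atTop.liminf (fun i => νs i G)) =
      atTop.liminf (ENNReal.ofNNReal ∘ fun i => νs i G) := by
    refine Monotone.map_liminf_of_continuousAt (F := atTop) ENNReal.coe_mono (fun i => νs i G)
      ENNReal.continuous_coe.continuousAt ?_ ?_
    · exact Filter.IsBoundedUnder.isCoboundedUnder_ge ⟨1, by simp⟩
    · exact ⟨0, by simp⟩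
  rw [← ENNReal.coe_le_coe, aux]
  simp only [Function.comp_def, MeasureTheory.ProbabilityMeasure.ennreal_coeFn_eq_coeFn_toMeasure]
  exact h G hG

lemma fp_nonneg {ν : Measure X} {q : ℝ} (x : X) : 0 ≤ fp q ν x :=
  integral_nonneg fun y => Real.rpow_nonneg dist_nonneg q

lemma fp_tendsto_of_dense {q : ℝ} (hq : 1 ≤ q) {μ : Measure X} [IsProbabilityMeasure μ]
    (hμ : ∀ x : X, Integrable (fun y => dist x y ^ q) μ)
    {νs : ℕ → Measure X} [∀ n, IsProbabilityMeasure (νs n)]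
    (hν : ∀ n, ∀ x : X, Integrable (fun y => dist x y ^ q) (νs n))
    {D : Set X} (hD : Dense D)
    (h : ∀ x' ∈ D, Tendsto (fun n => fp q (νs n) x') atTop (𝓝 (fp q μ x')))
    (x : X) : Tendsto (fun n => fp q (νs n) x) atTop (𝓝 (fp q μ x)) := by
  have hq0 : 0 < q := lt_of_lt_of_le one_pos hq
  have hb : Tendsto (fun n => fp q (νs n) x ^ (1 / q)) atTop (𝓝 (fp q μ x ^ (1 / q))) := by
    rw [Metric.tendsto_atTop]
    intro ε hε
    obtain ⟨x', hx'D, hxx'⟩ := hD.exists_dist_lt x (show (0:ℝ) < ε / 4 by linarith)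
    have hconv : Tendsto (fun n => fp q (νs n) x' ^ (1 / q)) atTop (𝓝 (fp q μ x' ^ (1 / q))) :=
      (h x' hx'D).rpow_const (Or.inr (by positivity))
    rw [Metric.tendsto_atTop] at hconv
    obtain ⟨N, hN⟩ := hconv (ε / 4) (by linarith)
    refine ⟨N, fun n hn => ?_⟩
    have l1 := fp_rpow_lipschitz hq (hν n) x x'
    have l2 := fp_rpow_lipschitz hq (hν n) x' x
    have l3 := fp_rpow_lipschitz hq hμ x x'
    have l4 := fp_rpow_lipschitz hq hμ x' x
    rw [dist_comm x' x] at l2 l4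
    have hd := hN n hn
    rw [Real.dist_eq] at hd ⊢
    have h1 : |fp q (νs n) x ^ (1 / q) - fp q (νs n) x' ^ (1 / q)| ≤ dist x x' :=
      abs_sub_le_iff.mpr ⟨by linarith, by linarith⟩
    have h2 : |fp q μ x' ^ (1 / q) - fp q μ x ^ (1 / q)| ≤ dist x x' :=
      abs_sub_le_iff.mpr ⟨by linarith, by linarith⟩
    calc |fp q (νs n) x ^ (1 / q) - fp q μ x ^ (1 / q)|
        ≤ |fp q (νs n) x ^ (1 / q) - fp q (νs n) x' ^ (1 / q)|
          + |fp q (νs n) x' ^ (1 / q) - fp q μ x' ^ (1 / q)|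
          + |fp q μ x' ^ (1 / q) - fp q μ x ^ (1 / q)| := by
            have := abs_sub_le (fp q (νs n) x ^ (1 / q)) (fp q (νs n) x' ^ (1 / q))
              (fp q μ x ^ (1 / q))
            have := abs_sub_le (fp q (νs n) x' ^ (1 / q)) (fp q μ x' ^ (1 / q))
              (fp q μ x ^ (1 / q))
            linarith
      _ < ε := by linarith
  have h2 := hb.rpow_const (Or.inr hq0.le)
  have e : ∀ (ν : Measure X) (z : X), (fp q ν z ^ (1 / q)) ^ q = fp q ν z := fun ν z => by
    rw [one_div, Real.rpow_inv_rpow (fp_nonneg z) hq0.ne']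
  simp_rw [e] at h2
  exact h2

end Aux

theorem frechet_stmt13 {X : Type*} [MetricSpace X] [TopologicalSpace.SeparableSpace X]
    [MeasurableSpace X] [BorelSpace X]
    (p : ℝ) (hp : 1 ≤ p)
    (μ : Measure X) (hμprob : IsProbabilityMeasure μ) (hμPp : MemPp p μ)
    {Ω : Type*} [MeasurableSpace Ω] (P : Measure Ω) (hPprob : IsProbabilityMeasure P)
    (Y : ℕ → Ω → X) (hYmeas : ∀ i, Measurable (Y i))
    (hindep : iIndepFun Y P)
    (hlaw : ∀ i, Measure.map (Y i) P = μ) :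
    ∀ᵐ ω ∂P, TauWp p (fun n => empMeasure Y (n + 1) ω) μ := by
  haveI : SecondCountableTopology X := UniformSpace.secondCountable_of_separable X
  obtain ⟨B, hBcount, -, hBbasis⟩ := TopologicalSpace.exists_countable_basis X
  have hTc : {t : Set (Set X) | t ⊆ B ∧ t.Finite}.Countable := by
    have := Set.countable_setOf_finite_subset hBcount
    refine this.mono fun t ht => ?_
    simp only [Set.mem_setOf_eq] at ht ⊢
    exact ⟨ht.2, ht.1⟩
  obtain ⟨D, hDc, hDdense⟩ := TopologicalSpace.exists_countable_dense X
  have E1 : ∀ᵐ ω ∂P, ∀ t ∈ {t : Set (Set X) | t ⊆ B ∧ t.Finite},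
      Tendsto (fun n => ((empMeasure Y (n + 1) ω) (⋃₀ t)).toReal) atTop
        (𝓝 ((μ (⋃₀ t)).toReal)) := by
    rw [ae_ball_iff hTc]
    rintro t ⟨htB, htfin⟩
    have hVopen : IsOpen (⋃₀ t) := isOpen_sUnion fun s hs => hBbasis.isOpen (htB hs)
    have hVm : MeasurableSet (⋃₀ t) := hVopen.measurableSet
    have hg : Measurable ((⋃₀ t).indicator fun _ => (1:ℝ)) := measurable_const.indicator hVm
    have hgi : Integrable ((⋃₀ t).indicator fun _ => (1:ℝ)) μ :=
      (integrable_const (1:ℝ)).indicator hVm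
    filter_upwards [slln_aux Y hYmeas hindep hlaw hg hgi] with ω hω
    have hval : ∀ n : ℕ, ((empMeasure Y (n + 1) ω) (⋃₀ t)).toReal
        = (∑ i ∈ Finset.range (n + 1), (⋃₀ t).indicator (fun _ => (1:ℝ)) (Y i ω)) / ((n:ℝ) + 1) := by
      intro n
      rw [empMeasure_apply Y (n + 1) ω hVm, ENNReal.toReal_ofReal (by
        apply div_nonneg _ (by positivity)
        exact Finset.sum_nonneg fun i _ => Set.indicator_nonneg (fun _ _ => zero_le_one) _)]
      push_cast
      ring
    have hlim : (∫ y, (⋃₀ t).indicator (fun _ => (1:ℝ)) y ∂μ) = (μ (⋃₀ t)).toReal := by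
      rw [← measureReal_def, ← integral_indicator_one hVm]
      rfl
    simp_rw [hval]
    rw [← hlim]
    exact hω
  have E2 : ∀ᵐ ω ∂P, ∀ x ∈ D,
      Tendsto (fun n => fp p (empMeasure Y (n + 1) ω) x) atTop (𝓝 (fp p μ x)) := by
    rw [ae_ball_iff hDc]
    intro x hx
    have hg : Measurable fun y => dist x y ^ p :=
      ((continuous_const.dist continuous_id).rpow_const fun _ => Or.inr
        (le_trans zero_le_one hp)).measurable
    filter_upwards [slln_aux Y hYmeas hindep hlaw hg (hμPp x)] with ω hω
    have hval : ∀ n : ℕ, fp p (empMeasure Y (n + 1) ω) x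
        = (∑ i ∈ Finset.range (n + 1), dist x (Y i ω) ^ p) / ((n:ℝ) + 1) := by
      intro n
      rw [fp, integral_empMeasure hg Y (n + 1) ω]
      push_cast
      ring
    simp_rw [hval]
    exact hω
  filter_upwards [E1, E2] with ω h1 h2
  haveI : ∀ n, IsProbabilityMeasure (empMeasure Y (n + 1) ω) := fun n => empMeasure_isProb Y n ω
  haveI := hμprob
  constructor
  · set Ps : ℕ → ProbabilityMeasure X := fun n => ⟨empMeasure Y (n + 1) ω, inferInstance⟩ with hPs
    set Pμ : ProbabilityMeasure X := ⟨μ, hμprob⟩ with hPμ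
    have hten : Tendsto Ps atTop (𝓝 Pμ) := by
      apply prob_tendsto_of_liminf
      intro G hG
      exact weak_of_tendsto_on_basis hBbasis hBcount (fun t ht1 ht2 => h1 t ⟨ht1, ht2⟩)
        (fun n s => measure_ne_top _ _) (fun s => measure_ne_top _ _) G hG
    intro g
    exact ProbabilityMeasure.tendsto_iff_forall_integral_tendsto.mp hten g
  · intro x
    refine fp_tendsto_of_dense hp hμPp (fun n x' => ?_) hDdense h2 x
    exact integrable_empMeasure (((continuous_const.dist continuous_id).rpow_const fun _ =>
      Or.inr (le_trans zero_le_one hp)).measurable) Y (n + 1) ω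
end

section
/- Let (X,d) be a compact metric space, 1 ≤ p < ∞, and μ a Borel probability measure on X. Let Y_1, Y_2, … be i.i.d. X-valued random elements with common distribution μ, and let bar μ_n := (1/n)∑_{i=1}^n δ_{Y_i}. Then for every ε > 0 there exist constants c_1, c_2 > 0 (depending on (X,d), μ, p, and ε) such that P(ρ(F_p(bar μ_n), F_p(μ)) ≥ ε) ≤ c_1 exp(−c_2 n) for all n ∈ ℕ. -/
open MeasureTheory Filter Topology ProbabilityTheory

section Aux

open Finset

lemma integ_bdd' {α : Type*} [MeasurableSpace α] {ν : Measure α} [IsFiniteMeasure ν]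
    {g : α → ℝ} (hg : Measurable g) {C : ℝ} (h : ∀ y, |g y| ≤ C) : Integrable g ν :=
  (integrable_const C).mono' hg.aestronglyMeasurable
    (ae_of_all _ fun y => by simpa [Real.norm_eq_abs] using h y)

lemma exp_quad {u : ℝ} (hu : |u| ≤ 1) : Real.exp u ≤ 1 + u + u ^ 2 := by
  have h := Real.exp_bound hu (by norm_num : 0 < 2)
  have h2 : |Real.exp u - (1 + u)| ≤ |u| ^ 2 * (3 / 4) := by
    have hs : (∑ i ∈ Finset.range 2, u ^ i / i.factorial) = 1 + u := by
      simp [Finset.sum_range_succ]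
    calc |Real.exp u - (1 + u)| = |Real.exp u - ∑ i ∈ Finset.range 2, u ^ i / i.factorial| := by
          rw [hs]
      _ ≤ |u| ^ 2 * ((2 : ℕ).succ / ((2 : ℕ).factorial * 2)) := h
      _ = |u| ^ 2 * (3 / 4) := by norm_num
  have h3 : |u| ^ 2 = u ^ 2 := sq_abs u
  have := abs_le.mp h2
  nlinarith [sq_nonneg u]

lemma chernoff_aux {Ω : Type*} [MeasurableSpace Ω] (P : Measure Ω) [IsProbabilityMeasure P]
    (Z : ℕ → Ω → ℝ) (hm : ∀ i, Measurable (Z i))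
    (hind : iIndepFun Z P)
    {B a : ℝ} (hB : 0 < B) (ha : 0 < a)
    (hbd : ∀ i ω, |Z i ω| ≤ B) (hmean : ∀ i, ∫ ω, Z i ω ∂P = 0) (n : ℕ) :
    P {ω | (n : ℝ) * a ≤ ∑ i ∈ Finset.range n, Z i ω}
      ≤ ENNReal.ofReal (Real.exp (-(min 1 (a / (2 * B)) * a / (2 * B)) * n)) := by
  set γ := min 1 (a / (2 * B)) with hγdef
  have hγpos : 0 < γ := lt_min one_pos (by positivity)
  have hγ1 : γ ≤ 1 := min_le_left _ _
  have hγa : γ ≤ a / (2 * B) := min_le_right _ _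
  set s := γ / B with hsdef
  have hs : 0 < s := by positivity
  have hsB : s * B = γ := by rw [hsdef]; field_simp
  have hZint : ∀ i, Integrable (Z i) P := fun i => integ_bdd' (hm i) (hbd i)
  have hexpint : ∀ i, Integrable (fun ω => Real.exp (s * Z i ω)) P := by
    intro i
    refine integ_bdd' ((hm i).const_mul s).exp (C := Real.exp (s * B)) fun ω => ?_
    rw [abs_of_pos (Real.exp_pos _)]
    exact Real.exp_le_exp.mpr (by
      have := (abs_le.mp (hbd i ω)).2
      nlinarith)
  have hmgf : ∀ i, mgf (Z i) P s ≤ Real.exp (γ ^ 2) := by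
    intro i
    have hpt : ∀ ω, Real.exp (s * Z i ω) ≤ 1 + s * Z i ω + γ ^ 2 := by
      intro ω
      have habs : |s * Z i ω| ≤ γ := by
        rw [abs_mul, abs_of_pos hs]
        calc s * |Z i ω| ≤ s * B := by nlinarith [hbd i ω, abs_nonneg (Z i ω)]
          _ = γ := hsB
      have h1 : |s * Z i ω| ≤ 1 := habs.trans hγ1
      have h2 := exp_quad h1
      have h3 : (s * Z i ω) ^ 2 ≤ γ ^ 2 := by
        rw [← sq_abs]; exact pow_le_pow_left₀ (abs_nonneg _) habs 2
      linarith
    have heq : (fun ω => 1 + s * Z i ω + γ ^ 2) = fun ω => s * Z i ω + (1 + γ ^ 2) := by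
      funext ω; ring
    have hint2 : Integrable (fun ω => 1 + s * Z i ω + γ ^ 2) P := by
      rw [heq]; exact ((hZint i).const_mul s).add (integrable_const _)
    calc mgf (Z i) P s = ∫ ω, Real.exp (s * Z i ω) ∂P := rfl
      _ ≤ ∫ ω, (1 + s * Z i ω + γ ^ 2) ∂P := integral_mono (hexpint i) hint2 hpt
      _ = 1 + γ ^ 2 := by
          rw [heq, integral_add ((hZint i).const_mul s) (integrable_const _),
            integral_const_mul, hmean i, integral_const]
          simp
      _ ≤ Real.exp (γ ^ 2) := by linarith [Real.add_one_le_exp (γ ^ 2)]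
  set S := fun ω => ∑ i ∈ Finset.range n, Z i ω with hSdef
  have hSfun : (∑ i ∈ Finset.range n, Z i) = S := by
    funext ω; rw [hSdef]; exact Finset.sum_apply ω (Finset.range n) Z
  have hSmeas : Measurable S := Finset.measurable_sum _ fun i _ => hm i
  have hsum_int : Integrable (fun ω => Real.exp (s * S ω)) P := by
    refine integ_bdd' (hSmeas.const_mul s).exp (C := Real.exp (s * (n * B))) fun ω => ?_
    rw [abs_of_pos (Real.exp_pos _)]
    refine Real.exp_le_exp.mpr (mul_le_mul_of_nonneg_left ?_ hs.le)
    calc S ω ≤ |S ω| := le_abs_self _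
      _ ≤ ∑ i ∈ Finset.range n, |Z i ω| := Finset.abs_sum_le_sum_abs _ _
      _ ≤ ∑ _i ∈ Finset.range n, B := Finset.sum_le_sum fun i _ => hbd i ω
      _ = n * B := by simp [mul_comm]
  have hch := measure_ge_le_exp_mul_mgf (μ := P) (X := S) ((n : ℝ) * a) hs.le hsum_int
  have hmgfsum : mgf S P s ≤ Real.exp (n * γ ^ 2) := by
    rw [← hSfun, hind.mgf_sum hm]
    calc ∏ i ∈ Finset.range n, mgf (Z i) P s ≤ ∏ _i ∈ Finset.range n, Real.exp (γ ^ 2) :=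
          Finset.prod_le_prod (fun i _ => mgf_nonneg) (fun i _ => hmgf i)
      _ = Real.exp (γ ^ 2) ^ n := by simp
      _ = Real.exp (n * γ ^ 2) := by rw [← Real.exp_nat_mul]
  have hPne : P {ω | (n : ℝ) * a ≤ S ω} ≠ ⊤ := measure_ne_top _ _
  rw [ENNReal.le_ofReal_iff_toReal_le hPne (Real.exp_pos _).le]
  refine hch.trans ?_
  calc Real.exp (-s * ((n : ℝ) * a)) * mgf S P s
      ≤ Real.exp (-s * ((n : ℝ) * a)) * Real.exp (n * γ ^ 2) :=
        mul_le_mul_of_nonneg_left hmgfsum (Real.exp_pos _).le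
    _ = Real.exp (-s * ((n : ℝ) * a) + n * γ ^ 2) := by rw [← Real.exp_add]
    _ ≤ Real.exp (-(γ * a / (2 * B)) * n) := by
        refine Real.exp_le_exp.mpr ?_
        have hsa : s * a = γ * a / B := by rw [hsdef]; ring
        have h1 : γ ^ 2 ≤ γ * (a / (2 * B)) := by nlinarith
        have h3 : γ * a / B - γ * (a / (2 * B)) = γ * a / (2 * B) := by field_simp; ring
        have hn0 : (0 : ℝ) ≤ n := Nat.cast_nonneg n
        nlinarith [mul_le_mul_of_nonneg_left h1 hn0]

lemma rpow_lip {p M : ℝ} (hp : 1 ≤ p) {a b : ℝ}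
    (ha : a ∈ Set.Icc 0 M) (hb : b ∈ Set.Icc 0 M) :
    |a ^ p - b ^ p| ≤ p * M ^ (p - 1) * |a - b| := by
  have hM : (0:ℝ) ≤ M := le_trans ha.1 ha.2
  have key : ∀ x ∈ Set.Icc (0:ℝ) M,
      HasDerivWithinAt (fun x : ℝ => x ^ p) (p * x ^ (p - 1)) (Set.Icc 0 M) x := fun x _ =>
    (Real.hasDerivAt_rpow_const (Or.inr hp)).hasDerivWithinAt
  have bound : ∀ x ∈ Set.Icc (0:ℝ) M, ‖p * x ^ (p - 1)‖ ≤ p * M ^ (p - 1) := by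
    intro x hx
    rw [Real.norm_eq_abs, abs_mul, abs_of_nonneg (by linarith : (0:ℝ) ≤ p),
      abs_of_nonneg (Real.rpow_nonneg hx.1 _)]
    exact mul_le_mul_of_nonneg_left
      (Real.rpow_le_rpow hx.1 hx.2 (by linarith)) (by linarith)
  have := (convex_Icc (0:ℝ) M).norm_image_sub_le_of_norm_hasDerivWithin_le key bound hb ha
  simpa [Real.norm_eq_abs] using this

section FP
variable {X : Type*} [MetricSpace X] [CompactSpace X] [MeasurableSpace X] [BorelSpace X]

omit [MeasurableSpace X] [BorelSpace X] in
lemma dist_le_M' (x y : X) : dist x y ≤ max (Metric.diam (Set.univ : Set X)) 1 :=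
  le_trans (Metric.dist_le_diam_of_mem isCompact_univ.isBounded (Set.mem_univ x)
    (Set.mem_univ y)) (le_max_left _ _)

omit [CompactSpace X] in
lemma hmeas_dist_rpow (p : ℝ) (hp : 0 ≤ p) (x : X) :
    Measurable fun y => dist x y ^ p :=
  ((continuous_const.dist continuous_id).rpow_const fun _ => Or.inr hp).measurable

lemma dist_rpow_mem (p : ℝ) (hp : 0 ≤ p) (x y : X) :
    dist x y ^ p ∈ Set.Icc (0:ℝ) ((max (Metric.diam (Set.univ : Set X)) 1) ^ p) :=
  ⟨Real.rpow_nonneg dist_nonneg _, Real.rpow_le_rpow dist_nonneg (dist_le_M' x y) hp⟩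

lemma fp_mem (p : ℝ) (hp : 0 ≤ p) (ν : Measure X) [IsProbabilityMeasure ν] (x : X) :
    fp p ν x ∈ Set.Icc (0:ℝ) ((max (Metric.diam (Set.univ : Set X)) 1) ^ p) := by
  set B := (max (Metric.diam (Set.univ : Set X)) 1) ^ p with hB
  have hint : Integrable (fun y => dist x y ^ p) ν :=
    integ_bdd' (hmeas_dist_rpow p hp x) (C := B) fun y => by
      have := dist_rpow_mem p hp x y
      rw [abs_of_nonneg this.1]; exact this.2
  constructor
  · exact integral_nonneg fun y => (dist_rpow_mem p hp x y).1
  · have h2 : fp p ν x ≤ ∫ _y : X, B ∂ν :=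
      integral_mono hint (integrable_const _) fun y => (dist_rpow_mem p hp x y).2
    simpa using h2

lemma fp_lip (p : ℝ) (hp : 1 ≤ p) (ν : Measure X) [IsProbabilityMeasure ν] (x x' : X) :
    |fp p ν x - fp p ν x'| ≤
      (p * (max (Metric.diam (Set.univ : Set X)) 1) ^ (p - 1)) * dist x x' := by
  set M' := max (Metric.diam (Set.univ : Set X)) 1 with hM'
  set L := p * M' ^ (p - 1) with hL
  have hp0 : (0:ℝ) ≤ p := by linarith
  have hL0 : 0 ≤ L := mul_nonneg (by linarith) (Real.rpow_nonneg (by positivity) _)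
  have hint : ∀ z : X, Integrable (fun y => dist z y ^ p) ν := fun z =>
    integ_bdd' (hmeas_dist_rpow p hp0 z) (C := M' ^ p) fun y => by
      have := dist_rpow_mem p hp0 z y
      rw [abs_of_nonneg this.1]; exact this.2
  have hpt : ∀ y : X, |dist x y ^ p - dist x' y ^ p| ≤ L * dist x x' := by
    intro y
    calc |dist x y ^ p - dist x' y ^ p| ≤ L * |dist x y - dist x' y| := by
          rw [hL]
          exact rpow_lip hp ⟨dist_nonneg, dist_le_M' x y⟩ ⟨dist_nonneg, dist_le_M' x' y⟩
      _ ≤ L * dist x x' := mul_le_mul_of_nonneg_left (abs_dist_sub_le x x' y) hL0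
  calc |fp p ν x - fp p ν x'| = |∫ y, (dist x y ^ p - dist x' y ^ p) ∂ν| := by
        rw [fp, fp, integral_sub (hint x) (hint x')]
    _ ≤ ∫ y, |dist x y ^ p - dist x' y ^ p| ∂ν := by
        simpa [Real.norm_eq_abs] using
          norm_integral_le_integral_norm (fun y => dist x y ^ p - dist x' y ^ p) (μ := ν)
    _ ≤ ∫ _y : X, L * dist x x' ∂ν :=
        integral_mono ((hint x).sub (hint x')).abs (integrable_const _) hpt
    _ = L * dist x x' := by simp

lemma fp_continuous_s16 (p : ℝ) (hp : 1 ≤ p) (ν : Measure X) [IsProbabilityMeasure ν] :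
    Continuous (fp p ν) := by
  set L := p * (max (Metric.diam (Set.univ : Set X)) 1) ^ (p - 1) with hL
  have hL0 : 0 ≤ L := mul_nonneg (by linarith) (Real.rpow_nonneg (by positivity) _)
  refine (LipschitzWith.of_dist_le_mul (K := L.toNNReal) (f := fp p ν) ?_).continuous
  intro x x'
  rw [Real.dist_eq, Real.coe_toNNReal _ hL0]
  exact fp_lip p hp ν x x'

end FP

lemma emp_prob {X Ω : Type*} [MeasurableSpace X] (Y : ℕ → Ω → X) {n : ℕ} (hn : n ≠ 0) (ω : Ω) :
    IsProbabilityMeasure (empMeasure Y n ω) := by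
  constructor
  rw [empMeasure, Measure.smul_apply, Measure.coe_finset_sum, Finset.sum_apply]
  simp only [measure_univ, Finset.sum_const, Finset.card_range, nsmul_eq_mul, mul_one,
    smul_eq_mul]
  exact ENNReal.inv_mul_cancel (by exact_mod_cast hn) (ENNReal.natCast_ne_top n)

lemma emp_fp {X Ω : Type*} [MetricSpace X] [CompactSpace X] [MeasurableSpace X] [BorelSpace X]
    (Y : ℕ → Ω → X) (n : ℕ) (ω : Ω) (p : ℝ) (hp : 0 ≤ p) (x : X) :
    fp p (empMeasure Y n ω) x = (n : ℝ)⁻¹ * ∑ i ∈ Finset.range n, dist x (Y i ω) ^ p := by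
  have hmeas : Measurable fun y => dist x y ^ p :=
    ((continuous_const.dist continuous_id).rpow_const fun _ => Or.inr hp).measurable
  set M' := max (Metric.diam (Set.univ : Set X)) 1 with hM'
  have hbd : ∀ y : X, |dist x y ^ p| ≤ M' ^ p := by
    intro y
    rw [abs_of_nonneg (Real.rpow_nonneg dist_nonneg _)]
    refine Real.rpow_le_rpow dist_nonneg ?_ hp
    exact le_trans (Metric.dist_le_diam_of_mem isCompact_univ.isBounded (Set.mem_univ x)
      (Set.mem_univ y)) (le_max_left _ _)
  rw [fp, empMeasure, integral_smul_measure,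
    integral_finset_sum_measure (fun i _ => integ_bdd' hmeas hbd)]
  simp only [integral_dirac' _ _ hmeas.stronglyMeasurable, smul_eq_mul]
  congr 1
  simp

lemma rho_exists {X : Type*} [MetricSpace X] (C A : Set X) {ε : ℝ} (hε : 0 < ε)
    (h : ε ≤ rho C A) : ∃ x ∈ C, ε / 2 ≤ Metric.infDist x A := by
  by_contra hc
  push_neg at hc
  have hb : rho C A ≤ ε / 2 := by
    refine Real.iSup_le (fun x => Real.iSup_le (fun hx => (hc x hx).le) (by positivity))
      (by positivity)
  linarith

end Aux

theorem frechet_stmt16 {X : Type*} [MetricSpace X] [CompactSpace X]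
    [MeasurableSpace X] [BorelSpace X]
    (p : ℝ) (hp : 1 ≤ p)
    (μ : Measure X) (hμprob : IsProbabilityMeasure μ)
    {Ω : Type*} [MeasurableSpace Ω] (P : Measure Ω) (hPprob : IsProbabilityMeasure P)
    (Y : ℕ → Ω → X) (hYmeas : ∀ i, Measurable (Y i))
    (hindep : iIndepFun Y P)
    (hlaw : ∀ i, Measure.map (Y i) P = μ) :
    ∀ ε : ℝ, 0 < ε → ∃ c₁ c₂ : ℝ, 0 < c₁ ∧ 0 < c₂ ∧
      ∀ n : ℕ, 1 ≤ n →
        P {ω | ε ≤ rho (Fp p (empMeasure Y n ω) Set.univ) (Fp p μ Set.univ)}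
          ≤ ENNReal.ofReal (c₁ * Real.exp (-c₂ * n)) := by
  intro ε hε
  have hp0 : (0:ℝ) ≤ p := by linarith
  have hXne : Nonempty X := by
    by_contra h
    rw [not_nonempty_iff] at h
    have h1 : μ Set.univ = 1 := measure_univ
    rw [Set.univ_eq_empty_iff.mpr h] at h1
    simp at h1
  set M' := max (Metric.diam (Set.univ : Set X)) 1 with hM'
  have hM'1 : (1:ℝ) ≤ M' := le_max_right _ _
  set B := M' ^ p with hB
  have hB1 : (1:ℝ) ≤ B := by
    have := Real.rpow_le_rpow_of_exponent_le hM'1 hp0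
    rwa [Real.rpow_zero] at this
  have hBpos : (0:ℝ) < B := by linarith
  set L := p * M' ^ (p - 1) with hL
  have hLpos : (0:ℝ) < L := by
    have h1 : (0:ℝ) < M' ^ (p - 1) := Real.rpow_pos_of_pos (by linarith) _
    nlinarith
  have hfc : Continuous (fp p μ) := fp_continuous_s16 p hp μ
  obtain ⟨x₀, -, hx₀⟩ := isCompact_univ.exists_isMinOn Set.univ_nonempty hfc.continuousOn
  set A := Fp p μ Set.univ with hA
  have hx₀A : x₀ ∈ A := ⟨Set.mem_univ _, fun x' _ => isMinOn_iff.mp hx₀ x' (Set.mem_univ x')⟩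
  set K := {x : X | ε / 2 ≤ Metric.infDist x A} with hK
  by_cases hKne : K.Nonempty
  swap
  · refine ⟨1, 1, one_pos, one_pos, fun n _ => ?_⟩
    have hempty : {ω | ε ≤ rho (Fp p (empMeasure Y n ω) Set.univ) A} = ∅ := by
      rw [Set.eq_empty_iff_forall_notMem]
      intro ω hω
      obtain ⟨x, -, hx⟩ := rho_exists _ _ hε hω
      exact hKne ⟨x, hx⟩
    rw [hempty]
    simp
  · have hKclosed : IsClosed K := isClosed_le continuous_const (Metric.continuous_infDist_pt A)
    obtain ⟨x₁, hx₁K, hx₁⟩ := hKclosed.isCompact.exists_isMinOn hKne hfc.continuousOn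
    set δ := fp p μ x₁ - fp p μ x₀ with hδdef
    have hδpos : 0 < δ := by
      rcases lt_or_eq_of_le (isMinOn_iff.mp hx₀ x₁ (Set.mem_univ x₁)) with h | h
      · rw [hδdef]; linarith
      · exfalso
        have hx₁A : x₁ ∈ A := ⟨Set.mem_univ _, fun x' hx' => by
          rw [← h]; exact isMinOn_iff.mp hx₀ x' (Set.mem_univ x')⟩
        have h0 : Metric.infDist x₁ A = 0 := Metric.infDist_zero_of_mem hx₁A
        have : ε / 2 ≤ (0:ℝ) := h0 ▸ hx₁K
        linarith
    set a := δ / 4 with ha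
    have hapos : 0 < a := by rw [ha]; linarith
    set r := δ / (8 * L) with hr
    have hrpos : 0 < r := by rw [hr]; positivity
    obtain ⟨T, -, hTfin, hTcov⟩ := finite_cover_balls_of_compact (isCompact_univ : IsCompact (Set.univ : Set X)) hrpos
    set c₂ := min 1 (a / (2 * B)) * a / (2 * B) with hc₂
    have hc₂pos : 0 < c₂ := by
      rw [hc₂]
      have : 0 < min 1 (a / (2 * B)) := lt_min one_pos (by positivity)
      positivity
    refine ⟨2 * hTfin.toFinset.card + 1, c₂, by positivity, hc₂pos, fun n hn => ?_⟩
    have hn0 : n ≠ 0 := Nat.one_le_iff_ne_zero.mp hn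
    -- the random variables for each net point
    set g : X → X → ℝ := fun t y => dist t y ^ p - fp p μ t with hg
    have hgmeas : ∀ t, Measurable (g t) := fun t =>
      (hmeas_dist_rpow p hp0 t).sub measurable_const
    have hgbd : ∀ t y, |g t y| ≤ B := by
      intro t y
      have h1 := dist_rpow_mem p hp0 t y
      have h2 := fp_mem p hp0 μ t
      show |dist t y ^ p - fp p μ t| ≤ B
      rw [abs_le]
      exact ⟨by linarith [h1.1, h2.2], by linarith [h1.2, h2.1]⟩
    have hZmeas : ∀ t i, Measurable fun ω => g t (Y i ω) := fun t i =>
      (hgmeas t).comp (hYmeas i)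
    have hZind : ∀ t, iIndepFun (fun i => g t ∘ Y i) P :=
      fun t => hindep.comp _ fun _ => hgmeas t
    have hZmean : ∀ t i, ∫ ω, g t (Y i ω) ∂P = 0 := by
      intro t i
      have h1 : ∫ ω, dist t (Y i ω) ^ p ∂P = ∫ y, dist t y ^ p ∂μ := by
        rw [← hlaw i, integral_map (hYmeas i).aemeasurable
          (hmeas_dist_rpow p hp0 t).aestronglyMeasurable]
      have hint : Integrable (fun ω => dist t (Y i ω) ^ p) P := by
        refine integ_bdd' ((hmeas_dist_rpow p hp0 t).comp (hYmeas i)) (C := B) fun ω => ?_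
        have h2 := dist_rpow_mem p hp0 t (Y i ω)
        rw [abs_of_nonneg h2.1]; exact h2.2
      rw [hg]
      simp only []
      rw [integral_sub hint (integrable_const _), h1, integral_const]
      simp [fp]
    have hZneg_meas : ∀ t i, Measurable fun ω => -(g t (Y i ω)) := fun t i =>
      (hZmeas t i).neg
    have hZneg_ind : ∀ t, iIndepFun
        (fun i => (fun z => -z) ∘ (g t ∘ Y i)) P :=
      fun t => (hZind t).comp _ fun _ => measurable_neg
    have hZneg_mean : ∀ t i, ∫ ω, -(g t (Y i ω)) ∂P = 0 := by
      intro t i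
      rw [integral_neg, hZmean t i, neg_zero]
    have hZneg_bd : ∀ t i ω, |(-(g t (Y i ω)))| ≤ B := fun t i ω => by
      rw [abs_neg]; exact hgbd t (Y i ω)
    -- event inclusion
    set e := Real.exp (-c₂ * n) with he
    have hsub : {ω | ε ≤ rho (Fp p (empMeasure Y n ω) Set.univ) A} ⊆
        ⋃ t ∈ hTfin.toFinset,
          ({ω | (n : ℝ) * a ≤ ∑ i ∈ Finset.range n, g t (Y i ω)} ∪
           {ω | (n : ℝ) * a ≤ ∑ i ∈ Finset.range n, -(g t (Y i ω))}) := by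
      intro ω hω
      haveI := emp_prob Y hn0 ω
      set ν := empMeasure Y n ω with hν
      obtain ⟨xs, hxsC, hxsd⟩ := rho_exists _ _ hε hω
      obtain ⟨-, hxsmin⟩ := hxsC
      have hxsK : xs ∈ K := hxsd
      have hfx : fp p μ x₁ ≤ fp p μ xs := isMinOn_iff.mp hx₁ xs hxsK
      have hfn : fp p ν xs ≤ fp p ν x₀ := hxsmin x₀ (Set.mem_univ x₀)
      have key : δ / 2 ≤ |fp p ν xs - fp p μ xs| ∨ δ / 2 ≤ |fp p ν x₀ - fp p μ x₀| := by
        by_contra hcon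
        push_neg at hcon
        obtain ⟨h1, h2⟩ := hcon
        rw [abs_lt] at h1 h2
        rw [hδdef] at *
        linarith [h1.1, h1.2, h2.1, h2.2]
      obtain ⟨x, hxb⟩ : ∃ x : X, δ / 2 ≤ |fp p ν x - fp p μ x| := by
        rcases key with h | h
        exacts [⟨xs, h⟩, ⟨x₀, h⟩]
      obtain ⟨t, htT, hxt⟩ : ∃ t ∈ T, x ∈ Metric.ball t r := by
        have := hTcov (Set.mem_univ x)
        simpa using this
      have hdxt : dist x t < r := hxt
      have h1 : |fp p ν x - fp p ν t| ≤ L * r :=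
        le_trans (fp_lip p hp ν x t) (mul_le_mul_of_nonneg_left hdxt.le hLpos.le)
      have h2 : |fp p μ x - fp p μ t| ≤ L * r :=
        le_trans (fp_lip p hp μ x t) (mul_le_mul_of_nonneg_left hdxt.le hLpos.le)
      have hLr : L * r = δ / 8 := by rw [hr]; field_simp
      have htb : a ≤ |fp p ν t - fp p μ t| := by
        have htri : |fp p ν x - fp p μ x| ≤
            |fp p ν x - fp p ν t| + |fp p ν t - fp p μ t| + |fp p μ t - fp p μ x| := by
          have := abs_sub_le (fp p ν x) (fp p ν t) (fp p μ x)
          have := abs_sub_le (fp p ν t) (fp p μ t) (fp p μ x)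
          linarith [abs_sub_le (fp p ν x) (fp p ν t) (fp p μ x),
            abs_sub_le (fp p ν t) (fp p μ t) (fp p μ x)]
        rw [abs_sub_comm (fp p μ t)] at htri
        rw [ha]
        linarith [htri, h1, h2, hxb, hLr ▸ h1, hLr ▸ h2]
      -- turn into sum bound
      have hfnt : fp p ν t = (n : ℝ)⁻¹ * ∑ i ∈ Finset.range n, dist t (Y i ω) ^ p :=
        emp_fp Y n ω p hp0 t
      have hnpos : (0:ℝ) < n := by exact_mod_cast Nat.pos_of_ne_zero hn0
      have hsumeq : fp p ν t - fp p μ t = (n : ℝ)⁻¹ * ∑ i ∈ Finset.range n, g t (Y i ω) := by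
        rw [hfnt, hg]
        simp only [Finset.sum_sub_distrib, Finset.sum_const, Finset.card_range, nsmul_eq_mul]
        field_simp
      have hab : (n : ℝ) * a ≤ |∑ i ∈ Finset.range n, g t (Y i ω)| := by
        have h3 : |fp p ν t - fp p μ t| = (n : ℝ)⁻¹ * |∑ i ∈ Finset.range n, g t (Y i ω)| := by
          rw [hsumeq, abs_mul, abs_of_pos (by positivity : (0:ℝ) < (n:ℝ)⁻¹)]
        rw [h3] at htb
        calc (n : ℝ) * a ≤ (n : ℝ) * ((n : ℝ)⁻¹ * |∑ i ∈ Finset.range n, g t (Y i ω)|) :=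
              mul_le_mul_of_nonneg_left htb hnpos.le
          _ = |∑ i ∈ Finset.range n, g t (Y i ω)| := by field_simp
      rw [Set.mem_iUnion₂]
      refine ⟨t, hTfin.mem_toFinset.mpr htT, ?_⟩
      rcases le_or_gt ((n:ℝ) * a) (∑ i ∈ Finset.range n, g t (Y i ω)) with h | h
      · exact Set.mem_union_left _ h
      · refine Set.mem_union_right _ ?_
        rw [Set.mem_setOf_eq, Finset.sum_neg_distrib]
        rcases abs_cases (∑ i ∈ Finset.range n, g t (Y i ω)) with ⟨heq, -⟩ | ⟨heq, -⟩
        · rw [heq] at hab; linarith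
        · rw [heq] at hab; linarith
    -- measure bound
    calc P {ω | ε ≤ rho (Fp p (empMeasure Y n ω) Set.univ) A}
        ≤ P (⋃ t ∈ hTfin.toFinset,
          ({ω | (n : ℝ) * a ≤ ∑ i ∈ Finset.range n, g t (Y i ω)} ∪
           {ω | (n : ℝ) * a ≤ ∑ i ∈ Finset.range n, -(g t (Y i ω))})) := measure_mono hsub
      _ ≤ ∑ t ∈ hTfin.toFinset,
          P ({ω | (n : ℝ) * a ≤ ∑ i ∈ Finset.range n, g t (Y i ω)} ∪
           {ω | (n : ℝ) * a ≤ ∑ i ∈ Finset.range n, -(g t (Y i ω))}) :=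
          measure_biUnion_finset_le _ _
      _ ≤ ∑ _t ∈ hTfin.toFinset, ENNReal.ofReal (2 * e) := by
          refine Finset.sum_le_sum fun t _ => ?_
          have hb1 := chernoff_aux P (fun i ω => g t (Y i ω)) (hZmeas t) (hZind t)
            hBpos hapos (fun i ω => hgbd t (Y i ω)) (hZmean t) n
          have hb2 := chernoff_aux P (fun i ω => -(g t (Y i ω))) (hZneg_meas t) (hZneg_ind t)
            hBpos hapos (hZneg_bd t) (hZneg_mean t) n
          have hee : Real.exp (-(min 1 (a / (2 * B)) * a / (2 * B)) * n) = e := by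
            rw [he, hc₂]
          calc P _ ≤ _ + _ := measure_union_le _ _
            _ ≤ ENNReal.ofReal e + ENNReal.ofReal e := by
                rw [← hee]; exact add_le_add hb1 hb2
            _ = ENNReal.ofReal (2 * e) := by
                rw [← ENNReal.ofReal_add (Real.exp_pos _).le (Real.exp_pos _).le]
                congr 1; ring
      _ = (hTfin.toFinset.card : ENNReal) * ENNReal.ofReal (2 * e) := by
          rw [Finset.sum_const, nsmul_eq_mul]
      _ ≤ ENNReal.ofReal ((2 * hTfin.toFinset.card + 1) * e) := by
          rw [← ENNReal.ofReal_natCast, ← ENNReal.ofReal_mul (Nat.cast_nonneg _)]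
          refine ENNReal.ofReal_le_ofReal ?_
          have hepos : 0 < e := Real.exp_pos _
          nlinarith [hepos, Nat.cast_nonneg (α := ℝ) hTfin.toFinset.card]
end
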